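/- Let M and N be smooth finite-dimensional manifolds (without boundary, modeled on finite-dimensional real normed spaces with models with corners I and I′), and let q : M → N be a smooth surjective map which is a submersion (mfderiv I I′ q x is surjective for every x ∈ M) and whose fibers q⁻¹{y} are connected for every y ∈ N. Let f : M → ℝ be a smooth function such that (mfderiv I 𝓘(ℝ,ℝ) f x)(v) = 0 for every x ∈ M and every v ∈ ker(mfderiv I I′ q x). Then there exists a smooth function f̃ : N → ℝ such that f = f̃ ∘ q. -/

import Mathlib

open scoped Manifold
open Set Metric Function Topology

set_option maxHeartbeats 1000000 in
set_option synthInstance.maxHeartbeats 200000 in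
lemma lemVS {E F : Type*} [NormedAddCommGroup E] [NormedSpace ℝ E] [FiniteDimensional ℝ E]
    [NormedAddCommGroup F] [NormedSpace ℝ F] [FiniteDimensional ℝ F]
    {Ω : Set E} (hΩ : IsOpen Ω) {u₀ : E} (hu₀ : u₀ ∈ Ω)
    {Q : E → F} {φf : E → ℝ}
    (hQ : ContDiffOn ℝ (⊤ : ℕ∞) Q Ω) (hφ : ContDiffOn ℝ (⊤ : ℕ∞) φf Ω)
    (hker : ∀ u ∈ Ω, ∀ w : E, fderiv ℝ Q u w = 0 → fderiv ℝ φf u w = 0)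
    (hsurj : Function.Surjective (fderiv ℝ Q u₀)) :
    ∃ ε > 0, ∃ G : F → ℝ, ContDiffOn ℝ (⊤ : ℕ∞) G (ball (Q u₀) ε) ∧
      ∃ U : Set E, IsOpen U ∧ u₀ ∈ U ∧ U ⊆ Ω ∧ (∀ u ∈ U, φf u = G (Q u)) ∧
        ball (Q u₀) ε ⊆ Q '' U := by
  have hone : (1 : WithTop ℕ∞) ≤ ((⊤ : ℕ∞) : WithTop ℕ∞) := by exact_mod_cast le_top
  have hone0 : ((⊤ : ℕ∞) : WithTop ℕ∞) ≠ 0 := by simp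
  have hQAt : ∀ u ∈ Ω, ContDiffAt ℝ (⊤ : ℕ∞) Q u := fun u hu => hQ.contDiffAt (hΩ.mem_nhds hu)
  have hφAt : ∀ u ∈ Ω, ContDiffAt ℝ (⊤ : ℕ∞) φf u := fun u hu => hφ.contDiffAt (hΩ.mem_nhds hu)
  set D := fderiv ℝ Q u₀ with hD
  set K := LinearMap.ker (D : E →ₗ[ℝ] F) with hK
  obtain ⟨π, hπ⟩ := (Submodule.ClosedComplemented.of_finiteDimensional K : K.ClosedComplemented)
  set Φ : E → F × K := fun u => (Q u, π u) with hΦ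
  set A : E →L[ℝ] F × K := D.prod π with hA
  have hAbij : Function.Bijective A := by
    constructor
    · rw [injective_iff_map_eq_zero]
      intro u hu
      have h1 : D u = 0 := congrArg Prod.fst hu
      have h2 : π u = 0 := congrArg Prod.snd hu
      have huK : u ∈ K := by simpa [hK, LinearMap.mem_ker] using h1
      have := hπ ⟨u, huK⟩
      rw [h2] at this
      simpa using congrArg Subtype.val this.symm
    · rintro ⟨a, k⟩
      obtain ⟨u₁, hu₁⟩ := hsurj a
      refine ⟨u₁ + ((k : E) - ((π u₁ : K) : E)), ?_⟩
      have hkK : (k : E) ∈ K := k.2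
      have hπK : ((π u₁ : K) : E) ∈ K := (π u₁).2
      have hD2 : D ((k : E) - ((π u₁ : K) : E)) = 0 := by
        have h1 : D (k : E) = 0 := hkK
        have h2 : D ((π u₁ : K) : E) = 0 := hπK
        rw [map_sub, h1, h2, sub_zero]
      have hπ2 : π ((k : E) - ((π u₁ : K) : E)) = k - π u₁ := by
        rw [map_sub, hπ k, hπ (π u₁)]
      simp only [hA, ContinuousLinearMap.prod_apply, map_add, hu₁, hD2, hπ2, Prod.mk_add_mk,
        add_zero, Prod.mk.injEq]
      exact ⟨trivial, by abel⟩
  have hEfd : FiniteDimensional ℝ E := inferInstance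
  set eA : E ≃L[ℝ] F × K :=
    (LinearEquiv.ofBijective (A : E →ₗ[ℝ] F × K) hAbij).toContinuousLinearEquiv with heA
  have heAapp : ∀ u : E, eA u = A u := fun u => rfl
  have heAcoe : (eA : E →L[ℝ] F × K) = A := ContinuousLinearMap.ext heAapp
  have hΦAt : ∀ u ∈ Ω, ContDiffAt ℝ (⊤ : ℕ∞) Φ u := fun u hu =>
    (hQAt u hu).prodMk (π.contDiff.contDiffAt)
  have hΦderiv : ∀ u ∈ Ω, HasFDerivAt Φ ((fderiv ℝ Q u).prod π) u := fun u hu =>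
    (((hQAt u hu).differentiableAt hone0).hasFDerivAt).prodMk π.hasFDerivAt
  have hAeq : HasFDerivAt Φ ((eA : E →L[ℝ] F × K) : E →L[ℝ] F × K) u₀ := by
    rw [heAcoe]; exact hΦderiv u₀ hu₀
  set P := (hΦAt u₀ hu₀).toOpenPartialHomeomorph Φ hAeq hone0 with hP
  have hPcoe : (P : E → F × K) = Φ := rfl
  have hPsrc : u₀ ∈ P.source := ContDiffAt.mem_toOpenPartialHomeomorph_source _ _ _
  -- the set where the derivative of `Φ` is invertible
  set J : E → (E →L[ℝ] E) :=
    fun u => (eA.symm : F × K →L[ℝ] E).comp ((fderiv ℝ Q u).prod π) with hJ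
  have hJcont : ContinuousOn J Ω := by
    have hfd : ContinuousOn (fun u => fderiv ℝ Q u) Ω :=
      hQ.continuousOn_fderiv_of_isOpen hΩ hone
    have h1 : ContinuousOn (fun u => ((fderiv ℝ Q u).prod π : E →L[ℝ] F × K)) Ω := by
      have := (ContinuousLinearMap.prodₗᵢ (𝕜 := ℝ) (E := E) (F := F) (G := K)
        ℝ).continuous.comp_continuousOn (hfd.prodMk (continuousOn_const (c := π)))
      exact this
    exact ((ContinuousLinearMap.compL ℝ E (F × K) E
      (eA.symm : F × K →L[ℝ] E)).continuous.comp_continuousOn h1 : _)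
  have hJu₀ : J u₀ = ContinuousLinearMap.id ℝ E := by
    ext u
    have : ((fderiv ℝ Q u₀).prod π) u = eA u := (heAapp u).symm
    simp only [hJ, ContinuousLinearMap.comp_apply, this]
    exact eA.symm_apply_apply u
  set O : Set E := (Ω ∩ J ⁻¹' {L | IsUnit L}) ∩ P.source with hO
  have hOopen : IsOpen O :=
    (hJcont.isOpen_inter_preimage hΩ Units.isOpen).inter P.open_source
  have hu₀O : u₀ ∈ O := by
    refine ⟨⟨hu₀, ?_⟩, hPsrc⟩
    simp only [mem_preimage, mem_setOf_eq, hJu₀]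
    exact isUnit_one
  -- facts for `u ∈ O`
  have hbijO : ∀ u, u ∈ O → Function.Bijective ((fderiv ℝ Q u).prod π : E →L[ℝ] F × K) := by
    rintro u ⟨⟨huΩ, hUnit⟩, -⟩
    have hJbij : Function.Bijective (J u) := by
      obtain ⟨v, hv⟩ := hUnit
      refine Function.bijective_iff_has_inverse.2 ⟨(↑v⁻¹ : E →L[ℝ] E), ?_, ?_⟩
      · intro x
        have := congrArg (fun L : E →L[ℝ] E => L x) v.inv_mul
        simpa [ContinuousLinearMap.mul_apply, hv] using this
      · intro x
        have := congrArg (fun L : E →L[ℝ] E => L x) v.mul_inv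
        simpa [ContinuousLinearMap.mul_apply, hv] using this
    have hcomp : (fun x => eA (J u x)) = fun x => ((fderiv ℝ Q u).prod π) x := by
      funext x
      simp only [hJ, ContinuousLinearMap.comp_apply]
      exact eA.apply_symm_apply _
    have := eA.bijective.comp hJbij
    rw [Function.comp_def, hcomp] at this
    exact this
  -- for `u ∈ O`, a continuous linear equiv version of the derivative of `Φ`
  have hequivO : ∀ u, u ∈ O → ∃ e : E ≃L[ℝ] F × K,
      (e : E →L[ℝ] F × K) = (fderiv ℝ Q u).prod π := by
    intro u hu
    refine ⟨(LinearEquiv.ofBijective (((fderiv ℝ Q u).prod π : E →L[ℝ] F × K) : E →ₗ[ℝ] F × K)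
      (hbijO u hu)).toContinuousLinearEquiv, ?_⟩
    exact ContinuousLinearMap.ext fun x => rfl
  have hOΩ : O ⊆ Ω := fun u hu => hu.1.1
  -- smoothness of `P.symm` on `T`
  set T : Set (F × K) := P.target ∩ P.symm ⁻¹' O with hT
  have hTopen : IsOpen T := P.isOpen_inter_preimage_symm hOopen
  have hPsymmAt : ∀ z ∈ T, ContDiffAt ℝ (⊤ : ℕ∞) P.symm z := by
    rintro z ⟨hzt, hzO⟩
    obtain ⟨e, he⟩ := hequivO _ hzO
    refine P.contDiffAt_symm (f₀' := e) hzt ?_ ?_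
    · rw [he]
      exact hΦderiv _ (hOΩ hzO)
    · exact hΦAt _ (hOΩ hzO)
  -- key: the derivative of `φf ∘ P.symm` kills vertical vectors on `T`
  have key : ∀ z ∈ T, ∀ κ : K, fderiv ℝ (φf ∘ P.symm) z (0, κ) = 0 := by
    rintro z ⟨hzt, hzO⟩ κ
    set u := P.symm z with hu
    have huΩ : u ∈ Ω := hOΩ hzO
    have hPsymm : HasFDerivAt P.symm (fderiv ℝ P.symm z) z :=
      (((hPsymmAt z ⟨hzt, hzO⟩).differentiableAt hone0)).hasFDerivAt
    have comp1 : HasFDerivAt (Φ ∘ P.symm)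
        (((fderiv ℝ Q u).prod π).comp (fderiv ℝ P.symm z)) z :=
      (hΦderiv u huΩ).comp z hPsymm
    have idloc : Φ ∘ P.symm =ᶠ[nhds z] id := by
      filter_upwards [P.open_target.mem_nhds hzt] with w hw
      exact P.right_inv hw
    have hfid : ((fderiv ℝ Q u).prod π).comp (fderiv ℝ P.symm z)
        = ContinuousLinearMap.id ℝ (F × K) := by
      rw [← comp1.fderiv, idloc.fderiv_eq, fderiv_id]
    set w := fderiv ℝ P.symm z (0, κ) with hw
    have hQw : fderiv ℝ Q u w = 0 := by
      have := congrArg (fun L : (F × K) →L[ℝ] F × K => (L (0, κ)).1) hfid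
      simpa using this
    have hφw : fderiv ℝ φf u w = 0 := hker u huΩ w hQw
    have comp2 : HasFDerivAt (φf ∘ P.symm)
        ((fderiv ℝ φf u).comp (fderiv ℝ P.symm z)) z :=
      HasFDerivAt.comp z ((hφAt u huΩ).differentiableAt hone0).hasFDerivAt hPsymm
    rw [comp2.fderiv]
    exact hφw
  -- choose a small ball around `Φ u₀` inside `T`
  set z₀ : F × K := Φ u₀ with hz₀
  have hz₀T : z₀ ∈ T := by
    have h1 : z₀ ∈ P.target := P.map_source hPsrc
    have h2 : P.symm z₀ = u₀ := P.left_inv hPsrc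
    exact ⟨h1, by rw [mem_preimage, h2]; exact hu₀O⟩
  obtain ⟨ε, hε, hball⟩ := Metric.isOpen_iff.1 hTopen z₀ hz₀T
  have hpairT : ∀ y ∈ ball (Q u₀) ε, ∀ k ∈ ball (π u₀) ε, ((y, k) : F × K) ∈ T := by
    intro y hy k hk
    apply hball
    rw [← ball_prod_same]
    exact ⟨hy, hk⟩
  set G : F → ℝ := fun y => φf (P.symm (y, π u₀)) with hG
  refine ⟨ε, hε, G, ?_, (O ∩ Φ ⁻¹' (ball z₀ ε)), ?_, ?_, ?_, ?_, ?_⟩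
  · -- smoothness of G
    intro y hy
    have hzT : ((y, π u₀) : F × K) ∈ T := hpairT y hy _ (mem_ball_self hε)
    have h1 : ContDiffAt ℝ (⊤ : ℕ∞) (φf ∘ P.symm) (y, π u₀) :=
      ContDiffAt.comp _ (hφAt _ (hOΩ hzT.2)) (hPsymmAt _ hzT)
    have h2 : ContDiffAt ℝ (⊤ : ℕ∞) G y :=
      ContDiffAt.comp (g := φf ∘ P.symm) y h1 (contDiffAt_id.prodMk contDiffAt_const)
    exact h2.contDiffWithinAt
  · -- openness of U
    have hΦcont : ContinuousOn Φ O :=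
      ((hQ.continuousOn.mono hOΩ).prodMk (π.continuous.continuousOn))
    exact hΦcont.isOpen_inter_preimage hOopen isOpen_ball
  · exact ⟨hu₀O, mem_ball_self hε⟩
  · exact fun u hu => hOΩ hu.1
  · -- f = G ∘ Q on U
    rintro u ⟨huO, huball⟩
    have hQu : Q u ∈ ball (Q u₀) ε ∧ π u ∈ ball (π u₀) ε := by
      have huball' : ((Q u, π u) : F × K) ∈ ball ((Q u₀, π u₀) : F × K) ε := huball
      rw [← ball_prod_same] at huball'
      exact ⟨huball'.1, huball'.2⟩
    set g2 : K → ℝ := fun k => φf (P.symm (Q u, k)) with hg2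
    have hg2deriv : ∀ k ∈ ball (π u₀) ε,
        HasFDerivWithinAt g2
          ((fderiv ℝ (φf ∘ P.symm) ((Q u, k) : F × K)).comp
            (ContinuousLinearMap.inr ℝ F K)) (ball (π u₀) ε) k := by
      intro k hk
      have hzT : ((Q u, k) : F × K) ∈ T := hpairT _ hQu.1 _ hk
      have hdiff : DifferentiableAt ℝ (φf ∘ P.symm) ((Q u, k) : F × K) :=
        (ContDiffAt.comp _ (hφAt _ (hOΩ hzT.2)) (hPsymmAt _ hzT)).differentiableAt hone0
      exact (hdiff.hasFDerivAt.comp k (hasFDerivAt_prodMk_right (Q u) k)).hasFDerivWithinAt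
    have hbound : ∀ k ∈ ball (π u₀) ε,
        ‖(fderiv ℝ (φf ∘ P.symm) ((Q u, k) : F × K)).comp
          (ContinuousLinearMap.inr ℝ F K)‖ ≤ 0 := by
      intro k hk
      have hzT : ((Q u, k) : F × K) ∈ T := hpairT _ hQu.1 _ hk
      have h0 : (fderiv ℝ (φf ∘ P.symm) ((Q u, k) : F × K)).comp
          (ContinuousLinearMap.inr ℝ F K) = 0 := by
        refine ContinuousLinearMap.ext fun κ => ?_
        have := key _ hzT κ
        simpa using this
      rw [h0]
      exact le_of_eq (norm_zero (E := ↥K →L[ℝ] ℝ))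
    have heq : g2 (π u) = g2 (π u₀) := by
      have := (convex_ball (π u₀) ε).norm_image_sub_le_of_norm_hasFDerivWithin_le
        hg2deriv hbound (mem_ball_self hε) hQu.2
      have h0 : ‖g2 (π u) - g2 (π u₀)‖ ≤ 0 := by simpa using this
      have := norm_le_zero_iff.1 h0
      exact sub_eq_zero.1 this
    have hPu : P.symm ((Q u, π u) : F × K) = u := P.left_inv huO.2
    have h1 : φf u = g2 (π u) := by
      show φf u = φf (P.symm ((Q u, π u) : F × K))
      rw [hPu]
    rw [h1, heq]
  · -- ball ⊆ Q '' U
    intro y hy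
    have hzT : ((y, π u₀) : F × K) ∈ T := hpairT y hy _ (mem_ball_self hε)
    set u := P.symm ((y, π u₀) : F × K) with hu
    have huO : u ∈ O := hzT.2
    have hΦu : Φ u = ((y, π u₀) : F × K) := P.right_inv hzT.1
    refine ⟨u, ⟨huO, ?_⟩, congrArg Prod.fst hΦu⟩
    rw [mem_preimage, hΦu]
    rw [← ball_prod_same]
    exact ⟨hy, mem_ball_self hε⟩

set_option maxHeartbeats 1000000 in
set_option synthInstance.maxHeartbeats 200000 in
lemma lemA {EM : Type*} [NormedAddCommGroup EM] [NormedSpace ℝ EM]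
    [FiniteDimensional ℝ EM]
    {HM : Type*} [TopologicalSpace HM] {I : ModelWithCorners ℝ EM HM} [I.Boundaryless]
    {M : Type*} [TopologicalSpace M] [ChartedSpace HM M] [IsManifold I (⊤ : ℕ∞) M]
    {EN : Type*} [NormedAddCommGroup EN] [NormedSpace ℝ EN] [FiniteDimensional ℝ EN]
    {HN : Type*} [TopologicalSpace HN] {I' : ModelWithCorners ℝ EN HN} [I'.Boundaryless]
    {N : Type*} [TopologicalSpace N] [ChartedSpace HN N] [IsManifold I' (⊤ : ℕ∞) N]
    (q : M → N) (hq : ContMDiff I I' (⊤ : ℕ∞) q)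
    (hsub : ∀ x : M, Function.Surjective (mfderiv I I' q x))
    (f : M → ℝ) (hf : ContMDiff I 𝓘(ℝ, ℝ) (⊤ : ℕ∞) f)
    (hinv : ∀ (x : M) (v : TangentSpace I x),
      mfderiv I I' q x v = 0 → mfderiv I 𝓘(ℝ, ℝ) f x v = 0) (x : M) :
    ∃ V ∈ 𝓝 (q x), ∃ g : N → ℝ, ContMDiffOn I' 𝓘(ℝ, ℝ) (⊤ : ℕ∞) g V ∧
      ∃ U ∈ 𝓝 x, (∀ u ∈ U, f u = g (q u)) ∧ V ⊆ q '' U := by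
  have hrange : range (I : HM → EM) = univ := I.range_eq_univ
  have hrange' : range (I' : HN → EN) = univ := I'.range_eq_univ
  set φ := extChartAt I x with hφ
  set ψ := extChartAt I' (q x) with hψ
  set Ω : Set EM := φ.target ∩ φ.symm ⁻¹' (q ⁻¹' ψ.source) with hΩ
  have hΩopen : IsOpen Ω := by
    apply (continuousOn_extChartAt_symm x).isOpen_inter_preimage (isOpen_extChartAt_target x)
    exact (isOpen_extChartAt_source (q x)).preimage hq.continuous
  have hu₀t : φ x ∈ φ.target := (extChartAt I x).map_source (mem_extChartAt_source x)
  have hx0 : φ.symm (φ x) = x := extChartAt_to_inv x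
  have hu₀ : φ x ∈ Ω := by
    refine ⟨hu₀t, ?_⟩
    simp only [mem_preimage, hx0]
    exact mem_extChartAt_source (q x)
  set Q : EM → EN := fun u => ψ (q (φ.symm u)) with hQdef
  set Ff : EM → ℝ := fun u => f (φ.symm u) with hFdef
  -- basic facts for `u ∈ Ω`
  have hmem : ∀ u ∈ Ω, φ.symm u ∈ φ.source ∧ q (φ.symm u) ∈ ψ.source := fun u hu =>
    ⟨(extChartAt I x).map_target hu.1, hu.2⟩
  have hsymmAt : ∀ u ∈ Ω, ContMDiffAt 𝓘(ℝ, EM) I (⊤ : ℕ∞) φ.symm u := fun u hu =>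
    (contMDiffOn_extChartAt_symm x u hu.1).contMDiffAt
      ((isOpen_extChartAt_target x).mem_nhds hu.1)
  have hsymmD : ∀ u ∈ Ω, MDifferentiableAt 𝓘(ℝ, EM) I φ.symm u := fun u hu =>
    (hsymmAt u hu).mdifferentiableAt (by simp)
  have hψAt : ∀ u ∈ Ω, ContMDiffAt I' 𝓘(ℝ, EN) (⊤ : ℕ∞) ψ (q (φ.symm u)) := by
    intro u hu
    apply contMDiffAt_extChartAt'
    rw [← extChartAt_source I']
    exact (hmem u hu).2
  have hψD : ∀ u ∈ Ω, MDifferentiableAt I' 𝓘(ℝ, EN) ψ (q (φ.symm u)) := fun u hu =>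
    (hψAt u hu).mdifferentiableAt (by simp)
  have hQAt : ∀ u ∈ Ω, ContMDiffAt 𝓘(ℝ, EM) 𝓘(ℝ, EN) (⊤ : ℕ∞) Q u := fun u hu =>
    ((hψAt u hu).comp u ((hq _).comp u (hsymmAt u hu)))
  have hQ : ContDiffOn ℝ (⊤ : ℕ∞) Q Ω := fun u hu =>
    ((hQAt u hu).contDiffAt).contDiffWithinAt
  have hFf : ContDiffOn ℝ (⊤ : ℕ∞) Ff Ω := fun u hu =>
    ((((hf _).comp u (hsymmAt u hu)) : ContMDiffAt 𝓘(ℝ, EM) 𝓘(ℝ, ℝ) (⊤ : ℕ∞) Ff u).contDiffAt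
      ).contDiffWithinAt
  -- derivative decompositions
  have hQderiv : ∀ u ∈ Ω, fderiv ℝ Q u = (mfderiv I' 𝓘(ℝ, EN) ψ (q (φ.symm u))).comp
      ((mfderiv I I' q (φ.symm u)).comp (mfderiv 𝓘(ℝ, EM) I φ.symm u)) := by
    intro u hu
    have hqφ : MDifferentiableAt 𝓘(ℝ, EM) I' (q ∘ φ.symm) u :=
      ((hq _).mdifferentiableAt (by simp)).comp u (hsymmD u hu)
    have h1 : mfderiv 𝓘(ℝ, EM) 𝓘(ℝ, EN) (ψ ∘ (q ∘ φ.symm)) u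
        = (mfderiv I' 𝓘(ℝ, EN) ψ (q (φ.symm u))).comp
          (mfderiv 𝓘(ℝ, EM) I' (q ∘ φ.symm) u) :=
      mfderiv_comp u (hψD u hu) hqφ
    have h2 : mfderiv 𝓘(ℝ, EM) I' (q ∘ φ.symm) u
        = (mfderiv I I' q (φ.symm u)).comp (mfderiv 𝓘(ℝ, EM) I φ.symm u) :=
      mfderiv_comp u ((hq _).mdifferentiableAt (by simp)) (hsymmD u hu)
    have h3 : fderiv ℝ Q u = mfderiv 𝓘(ℝ, EM) 𝓘(ℝ, EN) (ψ ∘ (q ∘ φ.symm)) u :=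
      (mfderiv_eq_fderiv).symm
    rw [h3, h1, h2]
  have hFderiv : ∀ u ∈ Ω, fderiv ℝ Ff u = (mfderiv I 𝓘(ℝ, ℝ) f (φ.symm u)).comp
      (mfderiv 𝓘(ℝ, EM) I φ.symm u) := by
    intro u hu
    have h1 : mfderiv 𝓘(ℝ, EM) 𝓘(ℝ, ℝ) (f ∘ φ.symm) u
        = (mfderiv I 𝓘(ℝ, ℝ) f (φ.symm u)).comp (mfderiv 𝓘(ℝ, EM) I φ.symm u) :=
      mfderiv_comp u ((hf _).mdifferentiableAt (by simp)) (hsymmD u hu)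
    have h3 : fderiv ℝ Ff u = mfderiv 𝓘(ℝ, EM) 𝓘(ℝ, ℝ) (f ∘ φ.symm) u :=
      (mfderiv_eq_fderiv).symm
    rw [h3, h1]
  -- the kernel condition in charts
  have hker : ∀ u ∈ Ω, ∀ w : EM, fderiv ℝ Q u w = 0 → fderiv ℝ Ff u w = 0 := by
    intro u hu w hw
    set x' := φ.symm u with hx'
    set v : TangentSpace I x' := mfderiv 𝓘(ℝ, EM) I φ.symm u w with hv
    have hψv : mfderiv I' 𝓘(ℝ, EN) ψ (q x') (mfderiv I I' q x' v) = 0 := by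
      rw [hQderiv u hu] at hw
      exact hw
    have hψinj : Function.Injective (mfderiv I' 𝓘(ℝ, EN) ψ (q x')) := by
      have hid := mfderivWithin_extChartAt_symm_comp_mfderiv_extChartAt'
        (I := I') (x := q x) (y := q x') (hmem u hu).2
      have hleft : ∀ c : TangentSpace I' (q x'),
          (mfderivWithin 𝓘(ℝ, EN) I' ψ.symm (range (I' : HN → EN)) (ψ (q x')))
            ((mfderiv I' 𝓘(ℝ, EN) ψ (q x')) c) = c :=
        fun c => congrArg (fun L : _ →L[ℝ] TangentSpace I' (q x') => L c) hid
      intro a b hab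
      rw [← hleft a, ← hleft b, hab]
    have hqv : mfderiv I I' q x' v = 0 := hψinj (by simpa using hψv)
    have hfv : mfderiv I 𝓘(ℝ, ℝ) f x' v = 0 := hinv x' v hqv
    rw [hFderiv u hu]
    exact hfv
  -- surjectivity at the base point
  have hsurjQ : Function.Surjective (fderiv ℝ Q (φ x)) := by
    have hψs : Function.Surjective (mfderiv I' 𝓘(ℝ, EN) ψ (q (φ.symm (φ x)))) := by
      rw [hx0]
      have hid := mfderiv_extChartAt_comp_mfderivWithin_extChartAt_symm'
        (I := I') (x := q x) (y := q x) (mem_extChartAt_source (q x))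
      intro b
      refine ⟨mfderivWithin 𝓘(ℝ, EN) I' ψ.symm (range (I' : HN → EN)) (ψ (q x)) b, ?_⟩
      have := congrArg (fun L : _ →L[ℝ] TangentSpace 𝓘(ℝ, EN) (ψ (q x)) => L b) hid
      exact this
    have hφs : Function.Surjective (mfderiv 𝓘(ℝ, EM) I φ.symm (φ x)) := by
      have hid := mfderivWithin_extChartAt_symm_comp_mfderiv_extChartAt'
        (I := I) (x := x) (y := x) (mem_extChartAt_source x)
      have hmf : mfderivWithin 𝓘(ℝ, EM) I (extChartAt I x).symm (range (I : HM → EM))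
            ((extChartAt I x) x)
          = mfderiv 𝓘(ℝ, EM) I (extChartAt I x).symm ((extChartAt I x) x) := by
        rw [hrange, mfderivWithin_univ]
      intro b
      refine ⟨mfderiv I 𝓘(ℝ, EM) (extChartAt I x) x b, ?_⟩
      have h1 : (mfderivWithin 𝓘(ℝ, EM) I (extChartAt I x).symm (range (I : HM → EM))
            ((extChartAt I x) x)) ((mfderiv I 𝓘(ℝ, EM) (extChartAt I x) x) b) = b :=
        DFunLike.congr_fun hid b
      rw [hmf] at h1
      exact h1
    have hqs : Function.Surjective (mfderiv I I' q (φ.symm (φ x))) := by rw [hx0]; exact hsub x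
    rw [hQderiv (φ x) hu₀]
    exact hψs.comp (hqs.comp hφs)
  -- apply the vector space lemma
  obtain ⟨ε, hε, G, hGsmooth, U', hU'open, hu₀U', hU'Ω, hFG, hballsub⟩ :=
    lemVS hΩopen hu₀ hQ hFf hker hsurjQ
  have hQu₀ : Q (φ x) = ψ (q x) := by rw [hQdef]; simp only [hx0]
  refine ⟨ψ.source ∩ ψ ⁻¹' (ball (Q (φ x)) ε), ?_, fun y => G (ψ y), ?_, ?_⟩
  · apply Filter.inter_mem (extChartAt_source_mem_nhds (q x))
    apply (continuousAt_extChartAt (q x)).preimage_mem_nhds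
    rw [← hQu₀]
    exact ball_mem_nhds _ hε
  · -- smoothness of g on V
    intro y hy
    have h1 : ContDiffAt ℝ (⊤ : ℕ∞) G (ψ y) := hGsmooth.contDiffAt (isOpen_ball.mem_nhds hy.2)
    have h2 : ContMDiffAt I' 𝓘(ℝ, EN) (⊤ : ℕ∞) ψ y := by
      apply contMDiffAt_extChartAt'
      rw [← extChartAt_source I']
      exact hy.1
    exact ((h1.contMDiffAt).comp y h2).contMDiffWithinAt
  · refine ⟨φ.source ∩ φ ⁻¹' U', ?_, ?_, ?_⟩
    · apply Filter.inter_mem (extChartAt_source_mem_nhds x)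
      exact (continuousAt_extChartAt x).preimage_mem_nhds (hU'open.mem_nhds hu₀U')
    · -- f = g ∘ q on U
      rintro u ⟨hu1, hu2⟩
      have h1 : Ff (φ u) = G (Q (φ u)) := hFG (φ u) hu2
      have h2 : φ.symm (φ u) = u := (extChartAt I x).left_inv hu1
      have h3 : Ff (φ u) = f u := by rw [hFdef]; simp only [h2]
      have h4 : Q (φ u) = ψ (q u) := by rw [hQdef]; simp only [h2]
      rw [← h3, h1, h4]
    · -- V ⊆ q '' U
      rintro y ⟨hy1, hy2⟩
      obtain ⟨u', hu'U', hQu'⟩ := hballsub hy2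
      have hu'Ω : u' ∈ Ω := hU'Ω hu'U'
      have hx'' : φ.symm u' ∈ φ.source := (extChartAt I x).map_target hu'Ω.1
      have hφx'' : φ (φ.symm u') = u' := (extChartAt I x).right_inv hu'Ω.1
      have hq'' : q (φ.symm u') ∈ ψ.source := hu'Ω.2
      have heq : q (φ.symm u') = y := by
        apply (extChartAt I' (q x)).injOn hq'' hy1
        exact hQu'
      exact ⟨φ.symm u', ⟨hx'', by rw [mem_preimage, hφx'']; exact hu'U'⟩, heq⟩


/-- let `q : M → N` be a smooth surjective submersion between smooth
finite-dimensional boundaryless manifolds whose fibers `q⁻¹{y}` are connected, and let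
`f : M → ℝ` be a smooth function with `(mfderiv f x)(v) = 0` for every
`v ∈ ker(mfderiv q x)`.  Then there is a smooth `f̃ : N → ℝ` with `f = f̃ ∘ q`. -/
theorem statement16 {EM : Type*} [NormedAddCommGroup EM] [NormedSpace ℝ EM]
    [FiniteDimensional ℝ EM]
    {HM : Type*} [TopologicalSpace HM] {I : ModelWithCorners ℝ EM HM} [I.Boundaryless]
    {M : Type*} [TopologicalSpace M] [ChartedSpace HM M] [IsManifold I (⊤ : ℕ∞) M]
    {EN : Type*} [NormedAddCommGroup EN] [NormedSpace ℝ EN] [FiniteDimensional ℝ EN]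
    {HN : Type*} [TopologicalSpace HN] {I' : ModelWithCorners ℝ EN HN} [I'.Boundaryless]
    {N : Type*} [TopologicalSpace N] [ChartedSpace HN N] [IsManifold I' (⊤ : ℕ∞) N]
    (q : M → N) (hq : ContMDiff I I' (⊤ : ℕ∞) q) (hqsurj : Function.Surjective q)
    (hsub : ∀ x : M, Function.Surjective (mfderiv I I' q x))
    (hfib : ∀ y : N, IsPreconnected (q ⁻¹' {y}))
    (f : M → ℝ) (hf : ContMDiff I 𝓘(ℝ, ℝ) (⊤ : ℕ∞) f)
    (hinv : ∀ (x : M) (v : TangentSpace I x),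
      mfderiv I I' q x v = 0 → mfderiv I 𝓘(ℝ, ℝ) f x v = 0) :
    ∃ ft : N → ℝ, ContMDiff I' 𝓘(ℝ, ℝ) (⊤ : ℕ∞) ft ∧ f = ft ∘ q := by
  classical
  -- `f` is constant on the fibers of `q`
  have hconst : ∀ a b : M, q a = q b → f a = f b := by
    intro a b hab
    have hpc : PreconnectedSpace (q ⁻¹' {q a}) := Subtype.preconnectedSpace (hfib (q a))
    have hlc : IsLocallyConstant (fun p : q ⁻¹' {q a} => f p.1) := by
      rw [IsLocallyConstant.iff_exists_open]
      rintro ⟨p, hp⟩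
      obtain ⟨V, hV, g, hg, U, hU, hfg, hVsub⟩ := lemA q hq hsub f hf hinv p
      refine ⟨Subtype.val ⁻¹' (interior U),
        isOpen_interior.preimage continuous_subtype_val,
        mem_preimage.2 (mem_interior_iff_mem_nhds.2 hU), ?_⟩
      rintro ⟨r, hr⟩ hrU
      have h1 : f r = g (q r) := hfg r (interior_subset hrU)
      have h2 : f p = g (q p) := hfg p (mem_of_mem_nhds hU)
      have h3 : q r = q p := by
        have hr' : q r = q a := hr
        have hp' : q p = q a := hp
        rw [hr', hp']
      show f r = f p
      rw [h1, h2, h3]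
    have := hlc.apply_eq_of_preconnectedSpace
      (⟨a, rfl⟩ : q ⁻¹' {q a}) ⟨b, mem_preimage.2 (by simp [hab])⟩
    exact this
  choose sec hsec using hqsurj
  refine ⟨fun y => f (sec y), ?_, ?_⟩
  · intro y
    obtain ⟨V, hV, g, hg, U, hU, hfg, hVsub⟩ := lemA q hq hsub f hf hinv (sec y)
    rw [hsec y] at hV
    have hgAt : ContMDiffAt I' 𝓘(ℝ, ℝ) (⊤ : ℕ∞) g y := hg.contMDiffAt hV
    apply (hgAt.congr_of_eventuallyEq ?_).contMDiffWithinAt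
    filter_upwards [hV] with y' hy'
    obtain ⟨u, huU, hqu⟩ := hVsub hy'
    have h1 : f (sec y') = f u := hconst _ _ (by rw [hsec y', hqu])
    rw [h1, hfg u huU, hqu]
  · funext u
    exact hconst u (sec (q u)) (hsec (q u)).symm
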